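/- Let ≼ be a partial order on [n] ( n ≥ 1 ) with a greatest element such that for every i the up-set {j : i ≼ j} is totally ordered (a rooted-tree poset), and let w be its lexicographically minimal linear extension. Then for every i ∈ {1,…,n}, letting S_i = {w(1),…,w(i)} and letting K be the connected component containing max{w(1),…,w(i)} of the comparability graph of ≼ restricted to S_i, the set K has a greatest element with respect to ≼ and this greatest element equals w(i). -/

import Mathlib

open Classical

/-- The prefix set `S_i = {w(1), …, w(i)}`. -/
def prefixSet {n : ℕ} (w : Equiv.Perm (Fin n)) (i : Fin n) : Finset (Fin n) :=
  (Finset.univ.filter fun j => j ≤ i).image w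

/-- `w` is a linear extension of the relation `r` (`r a b` meaning `a ≼ b`). -/
def IsLinExt {n : ℕ} (r : Fin n → Fin n → Prop) (w : Equiv.Perm (Fin n)) : Prop :=
  ∀ i j : Fin n, r (w i) (w j) → i ≤ j

/-- `w` is the lexicographically minimal linear extension of `r`. -/
def IsLexMinLinExt {n : ℕ} (r : Fin n → Fin n → Prop) (w : Equiv.Perm (Fin n)) : Prop :=
  IsLinExt r w ∧ ∀ u : Equiv.Perm (Fin n), IsLinExt r u →
    w = u ∨ ∃ i : Fin n, (∀ j : Fin n, j < i → w j = u j) ∧ w i < u i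

/-- The edge relation of the comparability graph of `r` restricted to the
vertex subset `S`. -/
def compEdge {n : ℕ} (r : Fin n → Fin n → Prop) (S : Finset (Fin n))
    (a b : Fin n) : Prop :=
  a ∈ S ∧ b ∈ S ∧ a ≠ b ∧ (r a b ∨ r b a)

/-- The cycle sending `q ↦ p`, and `j ↦ j-1` for `q < j ≤ p`, identity elsewhere. -/
def cyc (n q p : ℕ) (hqp : q ≤ p) (hp : p < n) : Equiv.Perm (Fin n) where
  toFun j := if h : q ≤ j.val ∧ j.val ≤ p then
      (if j.val = q then ⟨p, hp⟩ else ⟨j.val - 1, by omega⟩) else j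
  invFun j := if h : q ≤ j.val ∧ j.val ≤ p then
      (if h2 : j.val = p then ⟨q, by omega⟩ else ⟨j.val + 1, by omega⟩) else j
  left_inv := by
    intro j
    by_cases h : q ≤ j.val ∧ j.val ≤ p
    · by_cases h1 : j.val = q
      · simp only [dif_pos h, if_pos h1]
        have h3 : q ≤ p ∧ p ≤ p := ⟨hqp, le_refl _⟩
        simp only [dif_pos h3, dif_pos rfl]
        ext; simp [h1]
      · simp only [dif_pos h, if_neg h1]
        have h3 : q ≤ j.val - 1 ∧ j.val - 1 ≤ p := by omega
        simp only [dif_pos h3]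
        have h4 : ¬ (j.val - 1 = p) := by omega
        simp only [dif_neg h4]
        ext; simp only []; omega
    · simp only [dif_neg h]
  right_inv := by
    intro j
    by_cases h : q ≤ j.val ∧ j.val ≤ p
    · by_cases h1 : j.val = p
      · simp only [dif_pos h, dif_pos h1]
        have h3 : q ≤ q ∧ q ≤ p := ⟨le_refl _, hqp⟩
        simp only [dif_pos h3, if_pos rfl]
        ext; simp [h1]
      · simp only [dif_pos h, dif_neg h1]
        have h3 : q ≤ j.val + 1 ∧ j.val + 1 ≤ p := by omega
        simp only [dif_pos h3]
        have h4 : ¬ (j.val + 1 = q) := by omega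
        simp only [if_neg h4]
        ext; simp
    · simp only [dif_neg h]

lemma cyc_apply_of_lt (n q p : ℕ) (hqp : q ≤ p) (hp : p < n) (j : Fin n) (h : j.val < q) :
    cyc n q p hqp hp j = j := by
  simp only [cyc, Equiv.coe_fn_mk]
  rw [dif_neg]; omega

lemma cyc_apply_of_gt (n q p : ℕ) (hqp : q ≤ p) (hp : p < n) (j : Fin n) (h : p < j.val) :
    cyc n q p hqp hp j = j := by
  simp only [cyc, Equiv.coe_fn_mk]
  rw [dif_neg]; omega

lemma cyc_apply_q (n q p : ℕ) (hqp : q ≤ p) (hp : p < n) (j : Fin n) (h : j.val = q) :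
    cyc n q p hqp hp j = ⟨p, hp⟩ := by
  simp only [cyc, Equiv.coe_fn_mk]
  rw [dif_pos (by omega), if_pos h]

lemma cyc_apply_mid (n q p : ℕ) (hqp : q ≤ p) (hp : p < n) (j : Fin n)
    (h1 : q < j.val) (h2 : j.val ≤ p) :
    cyc n q p hqp hp j = ⟨j.val - 1, by omega⟩ := by
  simp only [cyc, Equiv.coe_fn_mk]
  rw [dif_pos (by omega), if_neg (by omega)]

lemma mem_prefixSet_iff {n : ℕ} (w : Equiv.Perm (Fin n)) (i : Fin n) (x : Fin n) :
    x ∈ prefixSet w i ↔ w.symm x ≤ i := by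
  simp only [prefixSet, Finset.mem_image, Finset.mem_filter, Finset.mem_univ, true_and]
  constructor
  · rintro ⟨j, hj, rfl⟩; simpa using hj
  · intro h; exact ⟨w.symm x, h, by simp⟩

/-- Let `≼` be a rooted-tree poset on `[n]` (a partial order with a greatest
element whose up-sets are totally ordered) and `w` its lexicographically
minimal linear extension.  For each `i`, let `S_i = {w(1),…,w(i)}` and let `K`
be the connected component of the comparability graph of `≼` restricted to
`S_i` containing `max S_i`.  Then `K` has a `≼`-greatest element, and this
greatest element is `w(i)`. -/
theorem lexmin_backward_construction (n : ℕ) (hn : 1 ≤ n)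
    (r : Fin n → Fin n → Prop)
    (hrefl : ∀ a, r a a) (hantisymm : ∀ a b, r a b → r b a → a = b)
    (htrans : ∀ a b c, r a b → r b c → r a c)
    (hgreatest : ∃ g, ∀ a, r a g)
    (hupsets : ∀ a b c, r a b → r a c → r b c ∨ r c b)
    (w : Equiv.Perm (Fin n)) (hw : IsLexMinLinExt r w) :
    ∀ i : Fin n, ∀ m : Fin n, m ∈ prefixSet w i →
      (∀ x ∈ prefixSet w i, x ≤ m) →
      (w i ∈ prefixSet w i ∧
       Relation.ReflTransGen (compEdge r (prefixSet w i)) m (w i) ∧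
       ∀ x ∈ prefixSet w i,
         Relation.ReflTransGen (compEdge r (prefixSet w i)) m x → r x (w i)) := by
  intro i m hm hmax
  set S := prefixSet w i with hS
  have hwiS : w i ∈ S := by rw [hS, mem_prefixSet_iff]; simp
  -- w i is r-maximal in S
  have hmaxwi : ∀ b ∈ S, r (w i) b → b = w i := by
    intro b hbS hrb
    have h1 : i ≤ w.symm b := by
      have := hw.1 i (w.symm b) (by simpa using hrb)
      exact this
    have h2 : w.symm b ≤ i := (mem_prefixSet_iff w i b).mp hbS
    have : w.symm b = i := le_antisymm h2 h1
    rw [← this]; simp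
  set q := w.symm m with hqdef
  have hwq : w q = m := by rw [hqdef]; simp
  have hq : q ≤ i := (mem_prefixSet_iff w i m).mp hm
  -- greedy: an element at position p ∈ (q, i] must have a strict predecessor
  -- at position ≥ q
  have greedy : ∀ p : Fin n, q < p → p ≤ i →
      (∀ a, r a (w p) → a ≠ w p → w.symm a < q) → False := by
    intro p hqp hpi hpred
    have hqple : (q : ℕ) ≤ (p : ℕ) := le_of_lt hqp
    set c := cyc n q.val p.val hqple p.isLt with hc
    set u := w * c with hu
    have hup : ∀ j : Fin n, u j = w (c j) := fun j => rfl
    have hulin : IsLinExt r u := by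
      intro a b hr
      have hr' : r (w (c a)) (w (c b)) := hr
      have hcab : c a ≤ c b := hw.1 _ _ hr' 
      by_cases ha : q.val ≤ a.val ∧ a.val ≤ p.val
      · by_cases hb : q.val ≤ b.val ∧ b.val ≤ p.val
        · -- both inside the interval
          by_cases ha1 : a.val = q.val
          · rw [Fin.le_def]; omega
          · have hca : c a = ⟨a.val - 1, by omega⟩ :=
              cyc_apply_mid n q.val p.val hqple p.isLt a (by omega) ha.2
            by_cases hb1 : b.val = q.val
            · -- c b = p, and then w p has a strict predecessor at position a-1 ≥ q
              have hcb : c b = ⟨p.val, p.isLt⟩ :=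
                cyc_apply_q n q.val p.val hqple p.isLt b hb1
              have hpp : (⟨p.val, p.isLt⟩ : Fin n) = p := rfl
              rw [hca, hcb, hpp] at hr'
              have hne : w ⟨a.val - 1, by omega⟩ ≠ w p := by
                intro h
                have h2 := w.injective h
                have h3 : a.val - 1 = p.val := congrArg Fin.val h2
                omega
              have h5 := hpred _ hr' hne
              simp only [Equiv.symm_apply_apply, Fin.lt_def] at h5
              omega
            · have hcb : c b = ⟨b.val - 1, by omega⟩ :=
                cyc_apply_mid n q.val p.val hqple p.isLt b (by omega) hb.2
              rw [hca, hcb] at hcab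
              rw [Fin.le_def] at hcab ⊢
              simp only at hcab
              omega
        · -- a inside, b outside: b < q impossible, b > p fine
          have hcb : c b = b := by
            rcases (by omega : b.val < q.val ∨ p.val < b.val) with h | h
            · exact cyc_apply_of_lt n q.val p.val hqple p.isLt b h
            · exact cyc_apply_of_gt n q.val p.val hqple p.isLt b h
          have hcaval : q.val ≤ (c a).val ∧ (c a).val ≤ p.val := by
            by_cases ha1 : a.val = q.val
            · rw [cyc_apply_q n q.val p.val hqple p.isLt a ha1]; exact ⟨hqple, le_refl _⟩
            · rw [cyc_apply_mid n q.val p.val hqple p.isLt a (by omega) ha.2]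
              constructor <;> simp <;> omega
          rw [hcb] at hcab
          rw [Fin.le_def] at hcab ⊢
          omega
      · have hca : c a = a := by
          rcases (by omega : a.val < q.val ∨ p.val < a.val) with h | h
          · exact cyc_apply_of_lt n q.val p.val hqple p.isLt a h
          · exact cyc_apply_of_gt n q.val p.val hqple p.isLt a h
        by_cases hb : q.val ≤ b.val ∧ b.val ≤ p.val
        · have hcbval : q.val ≤ (c b).val ∧ (c b).val ≤ p.val := by
            by_cases hb1 : b.val = q.val
            · rw [cyc_apply_q n q.val p.val hqple p.isLt b hb1]; exact ⟨hqple, le_refl _⟩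
            · rw [cyc_apply_mid n q.val p.val hqple p.isLt b (by omega) hb.2]
              constructor <;> simp <;> omega
          rw [hca] at hcab
          rw [Fin.le_def] at hcab ⊢
          omega
        · have hcb : c b = b := by
            rcases (by omega : b.val < q.val ∨ p.val < b.val) with h | h
            · exact cyc_apply_of_lt n q.val p.val hqple p.isLt b h
            · exact cyc_apply_of_gt n q.val p.val hqple p.isLt b h
          rw [hca, hcb] at hcab
          exact hcab
    rcases hw.2 u hulin with heq | ⟨k, hagree, hlt⟩
    · have : w q = u q := by rw [heq]
      rw [hup, cyc_apply_q n q.val p.val hqple p.isLt q rfl] at this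
      have := w.injective this
      have : q.val = p.val := by rw [this]
      omega
    · rcases lt_trichotomy k q with h | h | h
      · have : u k = w k := by
          rw [hup, cyc_apply_of_lt n q.val p.val hqple p.isLt k (Fin.lt_def.mp h)]
        rw [this] at hlt
        exact absurd hlt (lt_irrefl _)
      · rw [h] at hlt
        have huq : u q = w p := by
          rw [hup, cyc_apply_q n q.val p.val hqple p.isLt q rfl]
        rw [huq, hwq] at hlt
        -- m < w p, but w p ∈ S so w p ≤ m
        have hwpS : w p ∈ S := by rw [hS, mem_prefixSet_iff]; simpa using hpi
        have := hmax (w p) hwpS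
        exact absurd (lt_of_lt_of_le hlt this) (lt_irrefl _)
      · have := hagree q h
        rw [hup, cyc_apply_q n q.val p.val hqple p.isLt q rfl] at this
        have hpp : (⟨p.val, p.isLt⟩ : Fin n) = p := rfl
        rw [hpp] at this
        have : q = p := w.injective this
        rw [this] at hqp
        exact absurd hqp (lt_irrefl _)
  -- connectivity: every position in [q, i] is connected to m
  have key : ∀ N : ℕ, ∀ p : Fin n, p.val ≤ N → q ≤ p → p ≤ i →
      Relation.ReflTransGen (compEdge r S) m (w p) := by
    intro N
    induction N with
    | zero =>
      intro p hpN hqp hpi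
      have : q = p := le_antisymm hqp (by rw [Fin.le_def]; omega)
      rw [← this, hwq]
    | succ N ih =>
      intro p hpN hqp hpi
      by_cases hpq : q = p
      · rw [← hpq, hwq]
      · have hqp' : q < p := lt_of_le_of_ne hqp hpq
        by_cases hex : ∃ a, r a (w p) ∧ a ≠ w p ∧ q ≤ w.symm a
        · obtain ⟨a, har, hane, hqa⟩ := hex
          set s := w.symm a with hsdef
          have hws : w s = a := by rw [hsdef]; simp
          have hsp : s < p := by
            have h1 : s ≤ p := hw.1 s p (by rw [hws]; exact har)
            have h2 : s ≠ p := by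
              intro h; rw [h] at hws; exact hane hws.symm
            exact lt_of_le_of_ne h1 h2
          have hsi : s ≤ i := le_trans (le_of_lt hsp) hpi
          have hpath := ih s (by rw [Fin.lt_def] at hsp; omega) hqa hsi
          rw [hws] at hpath
          refine hpath.tail ?_
          refine ⟨?_, ?_, hane, Or.inl har⟩
          · rw [hS, mem_prefixSet_iff]; rw [← hsdef]; exact hsi
          · rw [hS, mem_prefixSet_iff]; simpa using hpi
        · push_neg at hex
          exact absurd (greedy p hqp' hpi fun a h1 h2 => hex a h1 h2) id
  have hsymm : Symmetric (compEdge r S) := by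
    rintro a b ⟨h1, h2, h3, h4⟩
    exact ⟨h2, h1, h3.symm, h4.symm⟩
  -- closure: the set {x | r x (w i)} is closed under connectivity
  have hclosed : ∀ x y : Fin n, Relation.ReflTransGen (compEdge r S) x y →
      r x (w i) → r y (w i) := by
    intro x y hxy
    induction hxy with
    | refl => exact id
    | tail hab hedge ihf =>
      intro hx
      have hb := ihf hx
      obtain ⟨hbS, hcS, hne, hcomp⟩ := hedge
      rcases hcomp with h1 | h2
      · rcases hupsets _ _ _ h1 hb with h | h
        · exact h
        · rw [hmaxwi _ hcS h]; exact hrefl _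
      · exact htrans _ _ _ h2 hb
  have hpath : Relation.ReflTransGen (compEdge r S) m (w i) := key i.val i le_rfl hq le_rfl
  have hrev : Relation.ReflTransGen (compEdge r S) (w i) m :=
    (@Relation.ReflTransGen.symmetric _ _ ⟨hsymm⟩).symm _ _ hpath
  have hmwi : r m (w i) := hclosed (w i) m hrev (hrefl (w i))
  exact ⟨hwiS, hpath, fun x hx hpx => hclosed m x hpx hmwi⟩
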